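/- For every infinite cyclic subgroup K of Houghton's group H_n, the normalizer of K in H_n equals the centralizer of K in H_n: N_{H_n}(K) = C_{H_n}(K). -/

import Mathlib

/-- `f : ℕ × Fin n → ℕ × Fin n` is eventually a translation with translation
vector `m : Fin n → ℤ`: on each ray `ℕ × {x}`, for all sufficiently large `i`,
`f` sends `(i, x)` to `(i + m x, x)`. -/
def EvTrans (n : ℕ) (f : ℕ × Fin n → ℕ × Fin n) (m : Fin n → ℤ) : Prop :=
  ∀ x : Fin n, ∃ z : ℕ, ∀ i : ℕ, z ≤ i →
    (f (i, x)).2 = x ∧ ((f (i, x)).1 : ℤ) = (i : ℤ) + m x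

/-- Houghton's group `H_n`: the subgroup of the symmetric group on
`S = ℕ × Fin n` consisting of the permutations that are eventually
translations on each ray. -/
def Houghton (n : ℕ) : Subgroup (Equiv.Perm (ℕ × Fin n)) where
  carrier := {f : Equiv.Perm (ℕ × Fin n) | ∃ m : Fin n → ℤ, EvTrans n (⇑f) m}
  one_mem' := ⟨0, fun x => ⟨0, fun i _ => by simp⟩⟩
  mul_mem' := by
    rintro a b ⟨ma, hA⟩ ⟨mb, hB⟩
    refine ⟨ma + mb, fun x => ?_⟩
    obtain ⟨za, hza⟩ := hA x
    obtain ⟨zb, hzb⟩ := hB x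
    refine ⟨max zb ((za : ℤ) - mb x).toNat, fun i hi => ?_⟩
    have hib : zb ≤ i := le_trans (le_max_left _ _) hi
    obtain ⟨h2, h1⟩ := hzb i hib
    have hbx : (⇑b) (i, x) = ((b (i, x)).1, x) := Prod.ext_iff.mpr ⟨rfl, h2⟩
    have hk : za ≤ (b (i, x)).1 := by
      have h3 : ((za : ℤ) - mb x) ≤ (i : ℤ) := by
        calc ((za : ℤ) - mb x) ≤ (((za : ℤ) - mb x).toNat : ℤ) := Int.self_le_toNat _
          _ ≤ (i : ℤ) := by exact_mod_cast le_trans (le_max_right _ _) hi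
      have h4 : (za : ℤ) ≤ ((b (i, x)).1 : ℤ) := by rw [h1]; linarith
      exact_mod_cast h4
    obtain ⟨h4, h5⟩ := hza (b (i, x)).1 hk
    constructor
    · show ((a * b) (i, x)).2 = x
      rw [Equiv.Perm.mul_apply, hbx]
      exact h4
    · show (((a * b) (i, x)).1 : ℤ) = (i : ℤ) + (ma + mb) x
      rw [Equiv.Perm.mul_apply, hbx, h5, h1, Pi.add_apply]
      ring
  inv_mem' := by
    rintro a ⟨m, hm⟩
    refine ⟨-m, fun x => ?_⟩
    obtain ⟨z, hz⟩ := hm x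
    refine ⟨((z : ℤ) + m x).toNat, fun i hi => ?_⟩
    have h1 : (z : ℤ) + m x ≤ (i : ℤ) :=
      le_trans (Int.self_le_toNat _) (by exact_mod_cast hi)
    have h0 : (0 : ℤ) ≤ (i : ℤ) - m x := by
      have hz0 : (0 : ℤ) ≤ (z : ℤ) := Int.natCast_nonneg z
      linarith
    set j := ((i : ℤ) - m x).toNat with hjdef
    have hj' : (j : ℤ) = (i : ℤ) - m x := Int.toNat_of_nonneg h0
    have hjz : z ≤ j := by
      have : (z : ℤ) ≤ (j : ℤ) := by rw [hj']; linarith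
      exact_mod_cast this
    obtain ⟨h2, h3⟩ := hz j hjz
    have hfst : (a (j, x)).1 = i := by
      have : ((a (j, x)).1 : ℤ) = (i : ℤ) := by rw [h3, hj']; ring
      exact_mod_cast this
    have hfix : (⇑a) (j, x) = (i, x) := Prod.ext_iff.mpr ⟨hfst, h2⟩
    have hinv : (⇑a⁻¹) (i, x) = (j, x) := by
      rw [← hfix]
      exact Equiv.symm_apply_apply a (j, x)
    constructor
    · rw [hinv]
    · rw [hinv]
      show (j : ℤ) = (i : ℤ) + (-m) x
      rw [hj', Pi.neg_apply]
      ring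

section Aux

open Equiv

lemma evtrans_mul {n : ℕ} {a b : Equiv.Perm (ℕ × Fin n)} {ma mb : Fin n → ℤ}
    (hA : EvTrans n (⇑a) ma) (hB : EvTrans n (⇑b) mb) :
    EvTrans n (⇑(a * b)) (ma + mb) := by
  intro x
  obtain ⟨za, hza⟩ := hA x
  obtain ⟨zb, hzb⟩ := hB x
  refine ⟨max zb ((za : ℤ) - mb x).toNat, fun i hi => ?_⟩
  have hib : zb ≤ i := le_trans (le_max_left _ _) hi
  obtain ⟨h2, h1⟩ := hzb i hib
  have hbx : (⇑b) (i, x) = ((b (i, x)).1, x) := Prod.ext_iff.mpr ⟨rfl, h2⟩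
  have hk : za ≤ (b (i, x)).1 := by
    have h3 : ((za : ℤ) - mb x) ≤ (i : ℤ) := by
      calc ((za : ℤ) - mb x) ≤ (((za : ℤ) - mb x).toNat : ℤ) := Int.self_le_toNat _
        _ ≤ (i : ℤ) := by exact_mod_cast le_trans (le_max_right _ _) hi
    have h4 : (za : ℤ) ≤ ((b (i, x)).1 : ℤ) := by rw [h1]; linarith
    exact_mod_cast h4
  obtain ⟨h4, h5⟩ := hza (b (i, x)).1 hk
  constructor
  · show ((a * b) (i, x)).2 = x
    rw [Equiv.Perm.mul_apply, hbx]
    exact h4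
  · show (((a * b) (i, x)).1 : ℤ) = (i : ℤ) + (ma + mb) x
    rw [Equiv.Perm.mul_apply, hbx, h5, h1, Pi.add_apply]
    ring

lemma evtrans_inv {n : ℕ} {a : Equiv.Perm (ℕ × Fin n)} {m : Fin n → ℤ}
    (hm : EvTrans n (⇑a) m) : EvTrans n (⇑a⁻¹) (-m) := by
  intro x
  obtain ⟨z, hz⟩ := hm x
  refine ⟨((z : ℤ) + m x).toNat, fun i hi => ?_⟩
  have h1 : (z : ℤ) + m x ≤ (i : ℤ) :=
    le_trans (Int.self_le_toNat _) (by exact_mod_cast hi)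
  have h0 : (0 : ℤ) ≤ (i : ℤ) - m x := by
    have hz0 : (0 : ℤ) ≤ (z : ℤ) := Int.natCast_nonneg z
    linarith
  set j := ((i : ℤ) - m x).toNat with hjdef
  have hj' : (j : ℤ) = (i : ℤ) - m x := Int.toNat_of_nonneg h0
  have hjz : z ≤ j := by
    have : (z : ℤ) ≤ (j : ℤ) := by rw [hj']; linarith
    exact_mod_cast this
  obtain ⟨h2, h3⟩ := hz j hjz
  have hfst : (a (j, x)).1 = i := by
    have : ((a (j, x)).1 : ℤ) = (i : ℤ) := by rw [h3, hj']; ring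
    exact_mod_cast this
  have hfix : (⇑a) (j, x) = (i, x) := Prod.ext_iff.mpr ⟨hfst, h2⟩
  have hinv : (⇑a⁻¹) (i, x) = (j, x) := by
    rw [← hfix]
    exact Equiv.symm_apply_apply a (j, x)
  constructor
  · rw [hinv]
  · rw [hinv]
    show (j : ℤ) = (i : ℤ) + (-m) x
    rw [hj', Pi.neg_apply]
    ring

lemma evtrans_unique {n : ℕ} {f : ℕ × Fin n → ℕ × Fin n} {m m' : Fin n → ℤ}
    (h : EvTrans n f m) (h' : EvTrans n f m') : m = m' := by
  funext x
  obtain ⟨z, hz⟩ := h x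
  obtain ⟨z', hz'⟩ := h' x
  have e1 := (hz (max z z') (le_max_left _ _)).2
  have e2 := (hz' (max z z') (le_max_right _ _)).2
  rw [e1] at e2
  linarith

lemma evtrans_one {n : ℕ} : EvTrans n (⇑(1 : Equiv.Perm (ℕ × Fin n))) 0 :=
  fun x => ⟨0, fun i _ => by simp⟩

lemma evtrans_pow {n : ℕ} {a : Equiv.Perm (ℕ × Fin n)} {m : Fin n → ℤ}
    (hm : EvTrans n (⇑a) m) : ∀ k : ℕ, EvTrans n (⇑(a ^ k)) ((k : ℤ) • m) := by
  intro k
  induction k with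
  | zero => simpa using evtrans_one
  | succ k ih =>
      have := evtrans_mul ih hm
      rw [← pow_succ] at this
      convert this using 1
      push_cast
      module

lemma evtrans_zpow {n : ℕ} {a : Equiv.Perm (ℕ × Fin n)} {m : Fin n → ℤ}
    (hm : EvTrans n (⇑a) m) : ∀ k : ℤ, EvTrans n (⇑(a ^ k)) (k • m) := by
  intro k
  cases k with
  | ofNat k => simpa using evtrans_pow hm k
  | negSucc k =>
      have h := evtrans_inv (evtrans_pow hm (k + 1))
      rw [zpow_negSucc]
      have heq : Int.negSucc k • m = -((((k + 1 : ℕ)) : ℤ) • m) := by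
        rw [Int.negSucc_eq]
        push_cast
        module
      rw [heq]
      exact h

lemma evtrans_finorder {n : ℕ} {f : Equiv.Perm (ℕ × Fin n)}
    (hm : EvTrans n (⇑f) 0) : IsOfFinOrder f := by
  choose zf hzf using hm
  set z : ℕ := Finset.univ.sup zf with hzdef
  have hfix : ∀ q : ℕ × Fin n, z ≤ q.1 → f q = q := by
    rintro ⟨i, x⟩ hi
    have hle : zf x ≤ i := le_trans (Finset.le_sup (Finset.mem_univ x)) hi
    obtain ⟨h2, h1⟩ := hzf x i hle
    have : (f (i, x)).1 = i := by
      have : ((f (i, x)).1 : ℤ) = (i : ℤ) := by simpa using h1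
      exact_mod_cast this
    exact Prod.ext_iff.mpr ⟨this, h2⟩
  set p : ℕ × Fin n → Prop := fun q => q.1 < z with hp
  have hinv : ∀ q, p q ↔ p (f q) := by
    intro q
    constructor
    · intro hq
      by_contra hfq
      have : z ≤ (f q).1 := not_lt.mp hfq
      have := hfix (f q) this
      have : f q = q := f.injective this
      rw [this] at hfq
      exact hfq hq
    · intro hfq
      by_contra hq
      have : f q = q := hfix q (not_lt.mp hq)
      rw [this] at hfq
      exact hq hfq
  have hfin : Finite {q : ℕ × Fin n // p q} := by
    refine Finite.of_injective (fun q => ((⟨q.1.1, q.2⟩ : Fin z), q.1.2)) ?_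
    rintro ⟨⟨i, x⟩, hi⟩ ⟨⟨j, y⟩, hj⟩ h
    simp only [Fin.mk.injEq, Prod.mk.injEq] at h
    simp [Subtype.ext_iff, Prod.ext_iff, h.1, h.2]
  have hfo : IsOfFinOrder (f.subtypePerm (fun q => (hinv q).symm)) := isOfFinOrder_of_finite _
  obtain ⟨k, hk, hk1⟩ := isOfFinOrder_iff_pow_eq_one.mp hfo
  refine isOfFinOrder_iff_pow_eq_one.mpr ⟨k, hk, ?_⟩
  rw [Equiv.Perm.subtypePerm_pow] at hk1
  refine Equiv.ext fun q => ?_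
  show (f ^ k) q = q
  by_cases hq : p q
  · have := congrArg (fun σ : Equiv.Perm {q : ℕ × Fin n // p q} => (σ ⟨q, hq⟩ : {q // p q}).1) hk1
    simpa [Equiv.Perm.subtypePerm_apply] using this
  · have hall : ∀ j : ℕ, (f ^ j) q = q := by
      intro j
      induction j with
      | zero => simp
      | succ j ih =>
          rw [pow_succ', Equiv.Perm.mul_apply, ih]
          exact hfix q (not_lt.mp hq)
    exact hall k

end Aux

/-- For every infinite cyclic subgroup `K` of Houghton's
group `H_n`, the normalizer of `K` in `H_n` equals the centralizer of `K` in
`H_n`. -/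
theorem houghton_normalizer_eq_centralizer_of_infinite_cyclic (n : ℕ)
    (hn : 1 ≤ n) (K : Subgroup (Equiv.Perm (ℕ × Fin n)))
    (hK : K ≤ Houghton n) (hcyc : IsCyclic ↥K) (hinf : Infinite K) :
    Houghton n ⊓ Subgroup.normalizer (K : Set (Equiv.Perm (ℕ × Fin n))) =
      Houghton n ⊓ Subgroup.centralizer (K : Set (Equiv.Perm (ℕ × Fin n))) := by
  apply le_antisymm
  · -- normalizer side ≤ centralizer side
    rintro h hmem
    rw [Subgroup.mem_inf] at hmem ⊢
    obtain ⟨hH, hN⟩ := hmem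
    refine ⟨hH, ?_⟩
    -- obtain a generator of K
    obtain ⟨gK, hgK⟩ := hcyc.exists_generator
    set g : Equiv.Perm (ℕ × Fin n) := (gK : Equiv.Perm (ℕ × Fin n)) with hgdef
    have hgmem : g ∈ K := gK.2
    have hrep : ∀ k ∈ K, ∃ a : ℤ, g ^ a = k := by
      intro k hk
      obtain ⟨a, ha⟩ := hgK ⟨k, hk⟩
      have h5 := congrArg (Subtype.val) ha
      simp only [SubgroupClass.coe_zpow] at h5
      exact ⟨a, h5⟩
    have hgfin : ¬ IsOfFinOrder g := by
      intro hfo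
      have hsub : (K : Set (Equiv.Perm (ℕ × Fin n))) ⊆
          (Subgroup.zpowers g : Set (Equiv.Perm (ℕ × Fin n))) := by
        intro k hk
        obtain ⟨a, ha⟩ := hrep k hk
        exact ⟨a, ha⟩
      have hKfin : (K : Set (Equiv.Perm (ℕ × Fin n))).Finite :=
        hfo.finite_zpowers.subset hsub
      haveI : Finite ↥K := hKfin.to_subtype
      exact not_finite ↥K
    obtain ⟨mg, hmg⟩ := hK hgmem
    have hmgne : ∃ x : Fin n, mg x ≠ 0 := by
      by_contra hc
      push_neg at hc
      have : mg = 0 := funext fun x => hc x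
      exact hgfin (evtrans_finorder (this ▸ hmg))
    obtain ⟨mh, hmh⟩ := hH
    have hconj : h * g * h⁻¹ ∈ K := (Subgroup.mem_normalizer_iff.mp hN g).mp hgmem
    obtain ⟨a, ha⟩ := hrep _ hconj
    have h1 : EvTrans n (⇑(h * g * h⁻¹)) (mh + mg + -mh) :=
      evtrans_mul (evtrans_mul hmh hmg) (evtrans_inv hmh)
    have h2 : EvTrans n (⇑(h * g * h⁻¹)) (a • mg) := ha ▸ evtrans_zpow hmg a
    have h3 : a • mg = mh + mg + -mh := evtrans_unique h2 h1
    obtain ⟨x, hx⟩ := hmgne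
    have h4 : a * mg x = mg x := by
      have h5 := congrFun h3 x
      simp only [Pi.smul_apply, smul_eq_mul, Pi.add_apply, Pi.neg_apply] at h5
      linarith
    have ha1 : a = 1 := by
      have : a * mg x = 1 * mg x := by rw [h4, one_mul]
      exact mul_right_cancel₀ hx this
    rw [ha1, zpow_one] at ha
    have hcomm : Commute h g := by
      have hgh : g * h = h * g := by
        conv_lhs => rw [ha]
        group
      exact hgh.symm
    rw [Subgroup.mem_centralizer_iff]
    intro k hk
    obtain ⟨b, hb⟩ := hrep k hk
    rw [← hb]
    exact (hcomm.zpow_right b).eq.symm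
  · -- centralizer ≤ normalizer
    apply inf_le_inf_left
    intro h hh
    rw [Subgroup.mem_centralizer_iff] at hh
    rw [Subgroup.mem_normalizer_iff]
    intro k
    constructor
    · intro hk
      have hc : h * k * h⁻¹ = k := by
        rw [← hh k hk]
        group
      rw [hc]; exact hk
    · intro hk
      have h5 : (h * k * h⁻¹) * h = h * (h * k * h⁻¹) := hh _ hk
      have h7 : k = h * k * h⁻¹ := by
        calc k = h⁻¹ * ((h * k * h⁻¹) * h) * h⁻¹ * h := by group
          _ = h⁻¹ * (h * (h * k * h⁻¹)) * h⁻¹ * h := by rw [h5]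
          _ = h * k * h⁻¹ := by group
      rw [h7]
      exact hk
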